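/- Let m ≥ 1 and let M_1, …, M_m be real N×N matrices with nonnegative entries, each of which is invertible. Suppose the full cyclic product M^{(1)} = M_m M_{m-1} ⋯ M_1 is diagonalizable over ℂ and has a real eigenvalue λ > 1 that is algebraically simple and strictly dominant (|μ| < λ for every complex eigenvalue μ ≠ λ), with a right eigenvector all of whose components are nonzero and a left eigenvector all of whose components are nonzero. Then for every y ∈ ℝ^N with all components strictly negative, for every l ∈ {1, …, m} and every integer k ≥ 0, all components of M_{(l,1)} (M^{(1)})^k y are strictly negative, and for every l ∈ {1, …, m} and every coordinate i, the i-th component of M_{(l,1)} (M^{(1)})^k y tends to -∞ as k → ∞. -/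

import Mathlib

open Matrix MeasureTheory Filter Set

noncomputable section

/-- `U^{-∞}(M)`: points of the open negative orthant all of whose iterates under `M`
tend to `-∞` in every coordinate. -/
def UnegInf {N : ℕ} (M : Matrix (Fin N) (Fin N) ℝ) : Set (Fin N → ℝ) :=
  {y | (∀ i, y i < 0) ∧ ∀ i, Tendsto (fun k : ℕ => ((M ^ k) *ᵥ y) i) atTop atBot}

/-- `μ ∈ ℂ` is an eigenvalue of the real matrix `M` regarded as a complex matrix. -/
def IsCEigenvalue {N : ℕ} (M : Matrix (Fin N) (Fin N) ℝ) (μ : ℂ) : Prop :=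
  ∃ v : Fin N → ℂ, v ≠ 0 ∧ (M.map Complex.ofReal) *ᵥ v = μ • v

/-- `M` is diagonalizable over `ℂ`: `ℂ^N` has a basis of eigenvectors of `M`. -/
def DiagonalizableOverC {N : ℕ} (M : Matrix (Fin N) (Fin N) ℝ) : Prop :=
  ∃ b : Module.Basis (Fin N) ℂ (Fin N → ℂ), ∀ i, ∃ μ : ℂ,
    (M.map Complex.ofReal) *ᵥ (b i) = μ • (b i)

/-- Cyclic product of `d` of the matrices `M_j, M_{j+1}, …` (indices mod `m`),
with `M_j` applied first (i.e. `M_{j+d-1} ⋯ M_{j+1} M_j`). -/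
def cycProd {N m : ℕ} (M : Fin m → Matrix (Fin N) (Fin N) ℝ) (j : Fin m) (d : ℕ) :
    Matrix (Fin N) (Fin N) ℝ :=
  (List.range d).foldl
    (fun A i => M ⟨(j.val + i) % m, Nat.mod_lt _ (lt_of_le_of_lt (Nat.zero_le _) j.isLt)⟩ * A) 1

/-- The full return matrix `M^{(j)} = M_{j-1}⋯M_{j+1}M_j` (all `m` matrices in cyclic
order, `M_j` applied first). -/
def Mfull {N m : ℕ} (M : Fin m → Matrix (Fin N) (Fin N) ℝ) (j : Fin m) :
    Matrix (Fin N) (Fin N) ℝ :=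
  cycProd M j m

/-- The partial-turn matrix `M_{(l,j)} = M_l ⋯ M_j` in cyclic order (`M_j` applied
first, wrapping around if `l < j`); for `l = j` it is just `M_j`. -/
def Mpartial {N m : ℕ} (M : Fin m → Matrix (Fin N) (Fin N) ℝ) (l j : Fin m) :
    Matrix (Fin N) (Fin N) ℝ :=
  cycProd M j ((l.val + m - j.val) % m + 1)

/-- The cyclic successor `q + 1 (mod m)` of an index `q`. -/
def finSucc {m : ℕ} (q : Fin m) : Fin m :=
  ⟨(q.val + 1) % m, Nat.mod_lt _ (lt_of_le_of_lt (Nat.zero_le _) q.isLt)⟩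


namespace Stmt4Aux

open Polynomial

variable {N : ℕ}

lemma entry_nonneg_mul {A B : Matrix (Fin N) (Fin N) ℝ}
    (hA : ∀ i j, 0 ≤ A i j) (hB : ∀ i j, 0 ≤ B i j) : ∀ i j, 0 ≤ (A * B) i j := by
  intro i j
  rw [Matrix.mul_apply]
  exact Finset.sum_nonneg fun k _ => mul_nonneg (hA i k) (hB k j)

lemma entry_nonneg_pow {A : Matrix (Fin N) (Fin N) ℝ}
    (hA : ∀ i j, 0 ≤ A i j) (k : ℕ) : ∀ i j, 0 ≤ (A ^ k) i j := by
  induction k with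
  | zero =>
    intro i j
    rw [pow_zero, Matrix.one_apply]
    split <;> norm_num
  | succ k ih =>
    rw [pow_succ]
    exact entry_nonneg_mul ih hA

lemma exists_pos_entry {A : Matrix (Fin N) (Fin N) ℝ}
    (hA : ∀ i j, 0 ≤ A i j) (hU : IsUnit A) (i : Fin N) : ∃ j, 0 < A i j := by
  by_contra h
  push_neg at h
  have hrow : ∀ j, A i j = 0 := fun j => le_antisymm (h j) (hA i j)
  obtain ⟨u, rfl⟩ := hU
  have h1 : (((u : Matrix (Fin N) (Fin N) ℝ) * (↑u⁻¹ : Matrix (Fin N) (Fin N) ℝ)) *ᵥ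
      Pi.single i 1) i = 1 := by
    rw [Units.mul_inv]
    simp
  rw [← Matrix.mulVec_mulVec] at h1
  simp only [Matrix.mulVec, dotProduct] at h1
  simp [hrow] at h1

lemma mulVec_neg {A : Matrix (Fin N) (Fin N) ℝ}
    (hA : ∀ i j, 0 ≤ A i j) (hU : IsUnit A) {z : Fin N → ℝ} (hz : ∀ j, z j < 0) :
    ∀ i, (A *ᵥ z) i < 0 := by
  intro i
  obtain ⟨j0, hj0⟩ := exists_pos_entry hA hU i
  have : (A *ᵥ z) i = ∑ j, A i j * z j := rfl
  rw [this]
  have h := Finset.sum_lt_sum (f := fun j => A i j * z j) (g := fun _ => (0:ℝ))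
    (fun j _ => mul_nonpos_iff.mpr (Or.inl ⟨hA i j, (hz j).le⟩))
    ⟨j0, Finset.mem_univ j0, mul_neg_of_pos_of_neg hj0 (hz j0)⟩
  simpa using h

lemma mulVec_tendsto_atBot {A : Matrix (Fin N) (Fin N) ℝ}
    (hA : ∀ i j, 0 ≤ A i j) (hU : IsUnit A)
    {z : ℕ → Fin N → ℝ} (hneg : ∀ k j, z k j ≤ 0)
    (htend : ∀ j, Tendsto (fun k => z k j) atTop atBot) (i : Fin N) :
    Tendsto (fun k => (A *ᵥ z k) i) atTop atBot := by
  obtain ⟨j0, hj0⟩ := exists_pos_entry hA hU i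
  apply tendsto_atBot_mono (f := fun k => A i j0 * z k j0)
  · intro k
    have : (A *ᵥ z k) i = ∑ j, A i j * z k j := rfl
    rw [this]
    calc ∑ j, A i j * z k j ≤ ∑ j, (if j = j0 then A i j0 * z k j0 else 0) := by
          apply Finset.sum_le_sum
          intro j _
          by_cases hj : j = j0
          · simp [hj]
          · simp only [hj, if_false]
            exact mul_nonpos_iff.mpr (Or.inl ⟨hA i j, hneg k j⟩)
      _ = A i j0 * z k j0 := by simp
  · exact (htend j0).const_mul_atBot hj0


lemma cycProd_succ {N m : ℕ} (M : Fin m → Matrix (Fin N) (Fin N) ℝ) (j : Fin m) (d : ℕ) :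
    cycProd M j (d + 1) =
      M ⟨(j.val + d) % m, Nat.mod_lt _ (lt_of_le_of_lt (Nat.zero_le _) j.isLt)⟩ * cycProd M j d := by
  unfold cycProd
  rw [List.range_succ, List.foldl_append, List.foldl_cons, List.foldl_nil]

lemma cycProd_nonneg {N m : ℕ} {M : Fin m → Matrix (Fin N) (Fin N) ℝ}
    (h : ∀ q i j, 0 ≤ M q i j) (j : Fin m) (d : ℕ) :
    ∀ i i', 0 ≤ cycProd M j d i i' := by
  induction d with
  | zero =>
    intro i i'
    show (0:ℝ) ≤ (1 : Matrix (Fin N) (Fin N) ℝ) i i'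
    rw [Matrix.one_apply]; split <;> norm_num
  | succ d ih =>
    rw [cycProd_succ]
    intro i i'
    rw [Matrix.mul_apply]
    exact Finset.sum_nonneg fun k _ => mul_nonneg (h _ i k) (ih k i')

lemma cycProd_isUnit {N m : ℕ} {M : Fin m → Matrix (Fin N) (Fin N) ℝ}
    (h : ∀ q, IsUnit (M q)) (j : Fin m) (d : ℕ) : IsUnit (cycProd M j d) := by
  induction d with
  | zero => exact isUnit_one
  | succ d ih => rw [cycProd_succ]; exact (h _).mul ih


lemma charpoly_eq {A : Matrix (Fin N) (Fin N) ℂ} {b : Module.Basis (Fin N) ℂ (Fin N → ℂ)}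
    {μ : Fin N → ℂ} (hμ : ∀ i, A *ᵥ (b i) = μ i • b i) :
    A.charpoly = ∏ i, (X - C (μ i)) := by
  have h2 : LinearMap.toMatrix b b (Matrix.toLin' A) = Matrix.diagonal μ := by
    ext i j
    rw [LinearMap.toMatrix_apply, Matrix.toLin'_apply, hμ j, _root_.map_smul, Module.Basis.repr_self]
    by_cases h : i = j
    · subst h; simp
    · simp [Matrix.diagonal, h, Finsupp.single_apply, Ne.symm h]
  calc A.charpoly = (LinearMap.toMatrix' (Matrix.toLin' A)).charpoly := by
        rw [LinearMap.toMatrix'_toLin']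
    _ = (Matrix.toLin' A).charpoly := by
        rw [← LinearMap.toMatrix_eq_toMatrix']
        exact LinearMap.charpoly_toMatrix _ _
    _ = (Matrix.diagonal μ).charpoly := by
        rw [← h2, LinearMap.charpoly_toMatrix]
    _ = ∏ i, (X - C (μ i)) := by
        have h3 := Matrix.charpoly_of_upperTriangular (Matrix.diagonal μ)
          (Matrix.blockTriangular_diagonal μ)
        simpa using h3

lemma count_eq {μ : Fin N → ℂ} {lam : ℂ}
    (h : rootMultiplicity lam (∏ i, (X - C (μ i))) = 1) :
    ∃ i0 : Fin N, μ i0 = lam ∧ ∀ i, μ i = lam → i = i0 := by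
  classical
  have hP : ∏ i, (X - C (μ i)) = ((Finset.univ.val.map μ).map (fun a => X - C a)).prod := by
    simp [Finset.prod, Multiset.map_map, Function.comp_def]
  have hroots : (∏ i, (X - C (μ i))).roots = Finset.univ.val.map μ := by
    rw [hP, roots_multiset_prod_X_sub_C]
  have hcount : (Finset.univ.val.map μ).count lam = 1 := by
    rw [← hroots, count_roots, h]
  rw [Multiset.count_map] at hcount
  have hcard : (Finset.univ.filter (fun i => μ i = lam)).card = 1 := by
    have hswap : Multiset.filter (fun a => μ a = lam) Finset.univ.val
        = Multiset.filter (fun a => lam = μ a) Finset.univ.val :=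
      Multiset.filter_congr (fun x _ => eq_comm)
    show Multiset.card (Multiset.filter (fun i => μ i = lam) Finset.univ.val) = 1
    rw [hswap]
    exact hcount
  obtain ⟨i0, hi0⟩ := Finset.card_eq_one.mp hcard
  refine ⟨i0, ?_, ?_⟩
  · have : i0 ∈ Finset.univ.filter (fun i => μ i = lam) := by rw [hi0]; exact Finset.mem_singleton_self i0
    exact (Finset.mem_filter.mp this).2
  · intro i hi
    have : i ∈ Finset.univ.filter (fun i => μ i = lam) := Finset.mem_filter.mpr ⟨Finset.mem_univ i, hi⟩
    rw [hi0] at this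
    exact Finset.mem_singleton.mp this



lemma mapC_mulVec (A : Matrix (Fin N) (Fin N) ℝ) (x : Fin N → ℝ) :
    (A.map Complex.ofReal) *ᵥ (fun i => (x i : ℂ)) = fun i => ((A *ᵥ x) i : ℂ) := by
  funext i
  simp only [Matrix.mulVec, dotProduct, Matrix.map_apply]
  push_cast
  rfl

lemma mapC_pow (A : Matrix (Fin N) (Fin N) ℝ) (k : ℕ) :
    (A ^ k).map Complex.ofReal = (A.map Complex.ofReal) ^ k := by
  have hcoe : ∀ (B : Matrix (Fin N) (Fin N) ℝ),
      B.map Complex.ofReal = B.map (Complex.ofRealHom : ℝ →+* ℂ) := fun _ => rfl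
  induction k with
  | zero =>
    rw [pow_zero, pow_zero, hcoe]
    exact Matrix.map_one _ (map_zero _) (map_one _)
  | succ k ih =>
    rw [pow_succ, pow_succ, ← ih, hcoe, hcoe, hcoe, Matrix.map_mul]

lemma eig_mulVec (b : Module.Basis (Fin N) ℂ (Fin N → ℂ)) (B : Matrix (Fin N) (Fin N) ℂ)
    (ν : Fin N → ℂ) (hν : ∀ i, B *ᵥ b i = ν i • b i) (x : Fin N → ℂ) :
    B *ᵥ x = ∑ j, (b.repr x j * ν j) • b j := by
  conv_lhs => rw [← b.sum_repr x, ← Matrix.mulVecLin_apply, map_sum]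
  refine Finset.sum_congr rfl fun j _ => ?_
  rw [_root_.map_smul, Matrix.mulVecLin_apply, hν j, smul_smul]

lemma repr_eig (b : Module.Basis (Fin N) ℂ (Fin N → ℂ)) (B : Matrix (Fin N) (Fin N) ℂ)
    (ν : Fin N → ℂ) (hν : ∀ i, B *ᵥ b i = ν i • b i) (x : Fin N → ℂ) (i : Fin N) :
    b.repr (B *ᵥ x) i = ν i * b.repr x i := by
  rw [eig_mulVec b B ν hν x, map_sum]
  simp [_root_.map_smul, Module.Basis.repr_self, Finsupp.single_apply, Finset.sum_ite_eq]
  ring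

lemma key (hN : 1 ≤ N) (A : Matrix (Fin N) (Fin N) ℝ)
    (hdiag : ∃ b : Module.Basis (Fin N) ℂ (Fin N → ℂ), ∀ i, ∃ μ : ℂ,
      (A.map Complex.ofReal) *ᵥ (b i) = μ • (b i))
    (lam : ℝ) (hlam : 1 < lam)
    (hi0ex : ∃ b : Module.Basis (Fin N) ℂ (Fin N → ℂ), ∃ μ : Fin N → ℂ,
      (∀ i, (A.map Complex.ofReal) *ᵥ (b i) = μ i • b i) ∧
      ∃ i0, μ i0 = (lam : ℂ) ∧ ∀ i, μ i = (lam : ℂ) → i = i0)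
    (hdom : ∀ μ : ℂ, (∃ x : Fin N → ℂ, x ≠ 0 ∧ (A.map Complex.ofReal) *ᵥ x = μ • x) →
      μ ≠ (lam : ℂ) → ‖μ‖ < lam)
    (w : Fin N → ℝ) (hw : A *ᵥ w = lam • w) (hwne : ∀ i, w i ≠ 0)
    (v : Fin N → ℝ) (hv : Aᵀ *ᵥ v = lam • v) (hvne : ∀ i, v i ≠ 0) :
    v ⬝ᵥ w ≠ 0 ∧ ∀ x : Fin N → ℝ, ∃ t : ℝ,
      (∀ p, Tendsto (fun k : ℕ => ((A ^ k) *ᵥ x) p / lam ^ k) atTop (nhds (t * w p))) ∧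
      t * (v ⬝ᵥ w) = v ⬝ᵥ x := by
  classical
  obtain ⟨b, μ, hμ, i0, hi0, hi0u⟩ := hi0ex
  set AC := A.map Complex.ofReal with hACdef
  have hlam0 : (0:ℝ) < lam := lt_trans one_pos hlam
  have hlamC : (lam : ℂ) ≠ 0 := by
    simpa using hlam0.ne'
  have habs : ∀ i, i ≠ i0 → ‖μ i‖ < lam := by
    intro i hi
    exact hdom (μ i) ⟨b i, b.ne_zero i, hμ i⟩ (fun hcon => hi (hi0u i hcon))
  -- complex right eigenvector
  set wC : Fin N → ℂ := fun i => (w i : ℂ) with hwCdef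
  have hwC : AC *ᵥ wC = (lam : ℂ) • wC := by
    rw [hACdef, hwCdef, mapC_mulVec, hw]
    funext i
    push_cast
    simp
  set d : Fin N → ℂ := fun i => b.repr wC i with hddef
  have hdzero : ∀ i, i ≠ i0 → d i = 0 := by
    intro i hi
    have h1 : b.repr (AC *ᵥ wC) i = μ i * d i := repr_eig b AC μ hμ wC i
    rw [hwC, _root_.map_smul] at h1
    have h2 : (lam : ℂ) * d i = μ i * d i := by
      rw [← h1, Finsupp.smul_apply, smul_eq_mul]
    have h3 : (μ i - (lam : ℂ)) * d i = 0 := by linear_combination -h2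
    rcases mul_eq_zero.mp h3 with h | h
    · exact absurd (hi0u i (sub_eq_zero.mp h)) hi
    · exact h
  have hwCrepr : wC = ∑ j, d j • b j := (b.sum_repr wC).symm
  have hdi0 : d i0 ≠ 0 := by
    intro h0
    have : wC = 0 := by
      rw [hwCrepr]
      apply Finset.sum_eq_zero
      intro j _
      by_cases hj : j = i0
      · rw [hj, h0, zero_smul]
      · rw [hdzero j hj, zero_smul]
    have hw0 : (w ⟨0, hN⟩ : ℂ) = 0 := congrFun this ⟨0, hN⟩
    exact hwne ⟨0, hN⟩ (by exact_mod_cast hw0)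
  have hbw : wC = d i0 • b i0 := by
    rw [hwCrepr]
    exact Finset.sum_eq_single_of_mem i0 (Finset.mem_univ i0)
      (fun j _ hj => by rw [hdzero j hj, zero_smul])
  -- complex left eigenvector
  set vC : Fin N → ℂ := fun i => (v i : ℂ) with hvCdef
  have hvCA : ∀ z : Fin N → ℂ, vC ⬝ᵥ (AC *ᵥ z) = (lam : ℂ) * (vC ⬝ᵥ z) := by
    intro z
    have hvCeq : vC ᵥ* AC = (lam : ℂ) • vC := by
      have h1 : ACᵀ *ᵥ vC = (lam : ℂ) • vC := by
        have h2 : ACᵀ = (Aᵀ).map Complex.ofReal := by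
          rw [hACdef, Matrix.transpose_map]
        rw [h2, hvCdef, mapC_mulVec, hv]
        funext i
        push_cast
        simp
      rw [← Matrix.mulVec_transpose]
      exact h1
    rw [Matrix.dotProduct_mulVec, hvCeq, smul_dotProduct, smul_eq_mul]
  have horth : ∀ i, i ≠ i0 → vC ⬝ᵥ b i = 0 := by
    intro i hi
    have h1 : vC ⬝ᵥ (AC *ᵥ b i) = (lam : ℂ) * (vC ⬝ᵥ b i) := hvCA (b i)
    rw [hμ i, dotProduct_smul, smul_eq_mul] at h1
    have h2 : (μ i - (lam : ℂ)) * (vC ⬝ᵥ b i) = 0 := by linear_combination h1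
    rcases mul_eq_zero.mp h2 with h | h
    · exact absurd (hi0u i (sub_eq_zero.mp h)) hi
    · exact h
  have hvwC : vC ⬝ᵥ wC = ((v ⬝ᵥ w : ℝ) : ℂ) := by
    simp only [dotProduct, hvCdef, hwCdef]
    push_cast
    rfl
  have hvw : v ⬝ᵥ w ≠ 0 := by
    intro h0
    have h1 : vC ⬝ᵥ wC = 0 := by rw [hvwC, h0]; simp
    rw [hbw, dotProduct_smul, smul_eq_mul] at h1
    have h2 : vC ⬝ᵥ b i0 = 0 := by
      rcases mul_eq_zero.mp h1 with h | h
      · exact absurd h hdi0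
      · exact h
    have h3 : ∀ i, vC ⬝ᵥ b i = 0 := by
      intro i
      by_cases hi : i = i0
      · rw [hi]; exact h2
      · exact horth i hi
    have h4 : ∀ z : Fin N → ℂ, vC ⬝ᵥ z = 0 := by
      intro z
      conv_lhs => rw [← b.sum_repr z]
      have h5 : vC ⬝ᵥ (∑ j, b.repr z j • b j) = ∑ j, b.repr z j * (vC ⬝ᵥ b j) := by
        simp only [dotProduct, Finset.sum_apply, Pi.smul_apply, smul_eq_mul,
          Finset.mul_sum]
        rw [Finset.sum_comm]
        exact Finset.sum_congr rfl fun j _ =>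
          Finset.sum_congr rfl fun p _ => by ring
      rw [h5]
      exact Finset.sum_eq_zero fun j _ => by rw [h3 j, mul_zero]
    have h5 : vC ⟨0, hN⟩ = 0 := by
      have := h4 (Pi.single ⟨0, hN⟩ 1)
      rwa [dotProduct_single, mul_one] at this
    have h6 : ((v ⟨0, hN⟩ : ℝ) : ℂ) = 0 := h5
    exact hvne ⟨0, hN⟩ (by exact_mod_cast h6)
  refine ⟨hvw, ?_⟩
  intro x
  set xC : Fin N → ℂ := fun i => (x i : ℂ) with hxCdef
  set c : ℂ := b.repr xC i0 with hcdef
  have hμpow : ∀ i (k : ℕ), (AC ^ k) *ᵥ b i = (μ i ^ k) • b i := by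
    intro i k
    induction k with
    | zero => simp [Matrix.one_mulVec]
    | succ k ih =>
      rw [pow_succ', ← Matrix.mulVec_mulVec, ih, Matrix.mulVec_smul, hμ i, smul_smul,
        ← pow_succ]
  have hcast : ∀ (k : ℕ) (p : Fin N), (((A ^ k) *ᵥ x) p : ℂ) = ((AC ^ k) *ᵥ xC) p := by
    intro k p
    rw [hACdef, ← mapC_pow, hxCdef, mapC_mulVec]
  have hdecomp : ∀ k : ℕ, (AC ^ k) *ᵥ xC = ∑ j, (b.repr xC j * μ j ^ k) • b j :=
    fun k => eig_mulVec b (AC ^ k) (fun j => μ j ^ k) (fun j => hμpow j k) xC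
  have hlimC : ∀ p, Tendsto (fun k : ℕ => ((((A ^ k) *ᵥ x) p / lam ^ k : ℝ) : ℂ)) atTop
      (nhds (c * b i0 p)) := by
    intro p
    have heq : ∀ k : ℕ, ((((A ^ k) *ᵥ x) p / lam ^ k : ℝ) : ℂ)
        = ∑ j, (b.repr xC j * (μ j / lam) ^ k) * b j p := by
      intro k
      rw [Complex.ofReal_div, Complex.ofReal_pow, hcast k p, hdecomp k, Finset.sum_apply,
        Finset.sum_div]
      refine Finset.sum_congr rfl fun j _ => ?_
      rw [Pi.smul_apply, smul_eq_mul, div_pow]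
      ring
    have htarget : (c * b i0 p) = ∑ j, (if j = i0 then c * b i0 p else 0) := by simp
    rw [htarget]
    refine Tendsto.congr (fun k => (heq k).symm) ?_
    apply tendsto_finset_sum
    intro j _
    by_cases hj : j = i0
    · subst hj
      have hconst : ∀ k : ℕ, (b.repr xC j * (μ j / lam) ^ k) * b j p = c * b j p := by
        intro k
        rw [hi0, div_self hlamC, one_pow, mul_one, hcdef]
      simp only [if_pos rfl]
      exact Tendsto.congr (fun k => (hconst k).symm) tendsto_const_nhds
    · simp only [if_neg hj]
      have h0 : Tendsto (fun k : ℕ => (μ j / lam) ^ k) atTop (nhds 0) := by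
        apply tendsto_pow_atTop_nhds_zero_of_norm_lt_one
        rw [norm_div, Complex.norm_real, Real.norm_eq_abs,
          abs_of_pos hlam0]
        exact (div_lt_one hlam0).mpr (habs j hj)
      have h1 := (h0.const_mul (b.repr xC j)).mul_const (b j p)
      simpa using h1
  set τ : ℂ := c / d i0 with hτdef
  have hclim : ∀ p, c * b i0 p = τ * wC p := by
    intro p
    have h1 : wC p = d i0 * b i0 p := by
      have := congrFun hbw p
      simpa using this
    rw [h1, hτdef]
    field_simp
  have him : τ.im = 0 := by
    set p0 : Fin N := ⟨0, hN⟩ with hp0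
    have h1 := (Complex.continuous_im.tendsto _).comp (hlimC p0)
    have h2 : (fun k : ℕ => ((((A ^ k) *ᵥ x) p0 / lam ^ k : ℝ) : ℂ).im) = fun _ => (0:ℝ) := by
      funext k
      rw [Complex.ofReal_im]
    have h3 : (c * b i0 p0).im = 0 := by
      have h1' : Tendsto (fun _ : ℕ => (0 : ℝ)) atTop (nhds ((c * b i0 p0).im)) := by
        rw [← h2]; exact h1
      exact tendsto_nhds_unique h1' tendsto_const_nhds
    rw [hclim p0] at h3
    have h4 : (τ * (w p0 : ℂ)).im = τ.im * w p0 := by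
      simp [Complex.mul_im]
    rw [show wC p0 = (w p0 : ℂ) from rfl, h4] at h3
    exact (mul_eq_zero.mp h3).resolve_right (hwne p0)
  have hτre : ((τ.re : ℝ) : ℂ) = τ := by
    exact Complex.ext rfl (by simp [him])
  have hreal : ∀ p, Tendsto (fun k : ℕ => ((A ^ k) *ᵥ x) p / lam ^ k) atTop
      (nhds (τ.re * w p)) := by
    intro p
    have h1 := (Complex.continuous_re.tendsto _).comp (hlimC p)
    have h3 : (c * b i0 p).re = τ.re * w p := by
      rw [hclim p, show wC p = (w p : ℂ) from rfl, ← hτre]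
      simp
    rw [h3] at h1
    exact Tendsto.congr (fun k => by
      show ((((A ^ k) *ᵥ x) p / lam ^ k : ℝ) : ℂ).re = _
      rw [Complex.ofReal_re]) h1
  refine ⟨τ.re, hreal, ?_⟩
  have hdotk : ∀ k : ℕ, v ⬝ᵥ ((A ^ k) *ᵥ x) = lam ^ k * (v ⬝ᵥ x) := by
    intro k
    induction k with
    | zero => simp [Matrix.one_mulVec]
    | succ k ih =>
      rw [pow_succ', ← Matrix.mulVec_mulVec, Matrix.dotProduct_mulVec,
        ← Matrix.mulVec_transpose, hv, smul_dotProduct, smul_eq_mul, ih, pow_succ]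
      ring
  have hSconst : ∀ k : ℕ, (∑ p, v p * (((A ^ k) *ᵥ x) p / lam ^ k)) = v ⬝ᵥ x := by
    intro k
    have hl : (lam : ℝ) ^ k ≠ 0 := pow_ne_zero _ hlam0.ne'
    have h6 : (∑ p, v p * (((A ^ k) *ᵥ x) p / lam ^ k))
        = (∑ p, v p * ((A ^ k) *ᵥ x) p) / lam ^ k := by
      rw [Finset.sum_div]
      exact Finset.sum_congr rfl fun p _ => by ring
    rw [h6, show (∑ p, v p * ((A ^ k) *ᵥ x) p) = v ⬝ᵥ ((A ^ k) *ᵥ x) from rfl, hdotk k]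
    field_simp
  have hlimS : Tendsto (fun k : ℕ => ∑ p, v p * (((A ^ k) *ᵥ x) p / lam ^ k)) atTop
      (nhds (∑ p, v p * (τ.re * w p))) :=
    tendsto_finset_sum _ fun p _ => (hreal p).const_mul (v p)
  have hEq : (∑ p, v p * (τ.re * w p)) = v ⬝ᵥ x := by
    have h2 : Tendsto (fun k : ℕ => ∑ p, v p * (((A ^ k) *ᵥ x) p / lam ^ k)) atTop
        (nhds (v ⬝ᵥ x)) :=
      Tendsto.congr (fun k => (hSconst k).symm) tendsto_const_nhds
    exact tendsto_nhds_unique hlimS h2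
  rw [← hEq, show v ⬝ᵥ w = ∑ p, v p * w p from rfl, Finset.mul_sum]
  exact Finset.sum_congr rfl fun p _ => by ring


end Stmt4Aux

/-- Theorem 3.7(a) at the matrix level: if all the basic transition matrices have
nonnegative entries and the full cyclic product has a simple strictly dominant real
eigenvalue `λ > 1` whose right and left eigenvectors have no zero component, then every
point of the open negative orthant has all partial-turn iterates in the open negative
orthant and every coordinate of those iterates tends to `-∞`. -/

theorem stmt4 {N m : ℕ} (hm : 1 ≤ m) (hN : 1 ≤ N)
    (M : Fin m → Matrix (Fin N) (Fin N) ℝ)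
    (hnonneg : ∀ q i j, 0 ≤ M q i j)
    (hinv : ∀ q, IsUnit (M q))
    (hdiag : DiagonalizableOverC (Mfull M ⟨0, hm⟩))
    (lam : ℝ) (hlam : 1 < lam)
    (hsimple : Polynomial.rootMultiplicity (lam : ℂ)
      ((Mfull M ⟨0, hm⟩).map Complex.ofReal).charpoly = 1)
    (hdom : ∀ μ : ℂ, IsCEigenvalue (Mfull M ⟨0, hm⟩) μ → μ ≠ (lam : ℂ) →
      ‖μ‖ < lam)
    (w : Fin N → ℝ) (hw : (Mfull M ⟨0, hm⟩) *ᵥ w = lam • w) (hwne : ∀ i, w i ≠ 0)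
    (v : Fin N → ℝ) (hv : (Mfull M ⟨0, hm⟩)ᵀ *ᵥ v = lam • v) (hvne : ∀ i, v i ≠ 0) :
    ∀ y : Fin N → ℝ, (∀ i, y i < 0) →
      (∀ l : Fin m, ∀ k : ℕ, ∀ i,
        ((Mpartial M l ⟨0, hm⟩ * (Mfull M ⟨0, hm⟩) ^ k) *ᵥ y) i < 0) ∧
      (∀ l : Fin m, ∀ i,
        Tendsto (fun k : ℕ => ((Mpartial M l ⟨0, hm⟩ * (Mfull M ⟨0, hm⟩) ^ k) *ᵥ y) i)
          atTop atBot) := by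
  classical
  intro y hy
  set A := Mfull M ⟨0, hm⟩ with hA
  have hlam0 : (0 : ℝ) < lam := lt_trans one_pos hlam
  have hAnn : ∀ i j, 0 ≤ A i j := Stmt4Aux.cycProd_nonneg hnonneg _ m
  have hAU : IsUnit A := Stmt4Aux.cycProd_isUnit hinv _ m
  obtain ⟨b, hb⟩ := hdiag
  choose μ hμ using hb
  have hchar := Stmt4Aux.charpoly_eq (A := A.map Complex.ofReal) (b := b) (μ := μ) hμ
  obtain ⟨i0, hi0, hi0u⟩ := Stmt4Aux.count_eq (μ := μ) (lam := (lam : ℂ))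
    (by rw [← hchar]; exact hsimple)
  obtain ⟨hvw, hkey2⟩ := Stmt4Aux.key hN A ⟨b, fun i => ⟨μ i, hμ i⟩⟩ lam hlam
    ⟨b, μ, hμ, i0, hi0, hi0u⟩ (fun μ' h h' => hdom μ' h h') w hw hwne v hv hvne
  -- all components of v have the same sign
  have hsign : ∀ j j', 0 < v j * v j' := by
    have hbase : ∀ j : Fin N, ∃ t : ℝ, t * (v ⬝ᵥ w) = v j ∧ ∀ i, 0 ≤ t * w i := by
      intro j
      obtain ⟨t, htend, hts⟩ := hkey2 (Pi.single j 1)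
      refine ⟨t, by rw [hts, dotProduct_single, mul_one], ?_⟩
      intro i
      refine ge_of_tendsto (htend i) (Eventually.of_forall fun k => ?_)
      apply div_nonneg _ (pow_nonneg hlam0.le k)
      have heq : ((A ^ k) *ᵥ Pi.single j 1) i = ∑ p, (A ^ k) i p * (Pi.single j 1 : Fin N → ℝ) p := rfl
      rw [heq]
      apply Finset.sum_nonneg
      intro p _
      refine mul_nonneg (Stmt4Aux.entry_nonneg_pow hAnn k i p) ?_
      rcases eq_or_ne p j with h | h
      · subst h; rw [Pi.single_eq_same]; norm_num
      · rw [Pi.single_eq_of_ne h]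
    intro j j'
    obtain ⟨t, ht1, ht2⟩ := hbase j
    obtain ⟨t', ht1', ht2'⟩ := hbase j'
    have hwi : w ⟨0, hN⟩ ≠ 0 := hwne ⟨0, hN⟩
    have htne : t ≠ 0 := fun h => hvne j (by rw [← ht1, h, zero_mul])
    have htne' : t' ≠ 0 := fun h => hvne j' (by rw [← ht1', h, zero_mul])
    have h1 : 0 < t * w ⟨0, hN⟩ :=
      lt_of_le_of_ne (ht2 ⟨0, hN⟩) (Ne.symm (mul_ne_zero htne hwi))
    have h2 : 0 < t' * w ⟨0, hN⟩ :=
      lt_of_le_of_ne (ht2' ⟨0, hN⟩) (Ne.symm (mul_ne_zero htne' hwi))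
    have h3 : 0 < t * t' := by nlinarith [mul_pos h1 h2, sq_nonneg (w ⟨0, hN⟩)]
    have h4 : 0 < (v ⬝ᵥ w) ^ 2 :=
      lt_of_le_of_ne (sq_nonneg _) (Ne.symm (pow_ne_zero 2 hvw))
    calc (0:ℝ) < (t * t') * (v ⬝ᵥ w) ^ 2 := mul_pos h3 h4
      _ = (t * (v ⬝ᵥ w)) * (t' * (v ⬝ᵥ w)) := by ring
      _ = v j * v j' := by rw [ht1, ht1']
  -- hence v ⬝ᵥ y ≠ 0
  have hvy : v ⬝ᵥ y ≠ 0 := by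
    rcases lt_or_gt_of_ne (hvne ⟨0, hN⟩) with hneg | hpos
    · have hall : ∀ j, v j < 0 := by
        intro j
        rcases lt_or_gt_of_ne (hvne j) with h | h
        · exact h
        · exfalso; have := hsign ⟨0, hN⟩ j; nlinarith
      have hpos' : 0 < ∑ j, v j * y j :=
        Finset.sum_pos (fun j _ => mul_pos_of_neg_of_neg (hall j) (hy j))
          ⟨⟨0, hN⟩, Finset.mem_univ _⟩
      exact ne_of_gt hpos'
    · have hall : ∀ j, 0 < v j := by
        intro j
        rcases lt_or_gt_of_ne (hvne j) with h | h
        · exfalso; have := hsign ⟨0, hN⟩ j; nlinarith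
        · exact h
      have hneg' : 0 < ∑ j, -(v j * y j) :=
        Finset.sum_pos (fun j _ => by have := mul_neg_of_pos_of_neg (hall j) (hy j); linarith)
          ⟨⟨0, hN⟩, Finset.mem_univ _⟩
      have : (∑ j, -(v j * y j)) = -(∑ j, v j * y j) := by rw [Finset.sum_neg_distrib]
      rw [this] at hneg'
      have : (∑ j, v j * y j) < 0 := by linarith
      exact ne_of_lt this
  obtain ⟨t, htend, hts⟩ := hkey2 y
  have htne : t ≠ 0 := fun h => hvy (by rw [← hts, h, zero_mul])
  -- all iterates stay in the negative orthant
  have hPk : ∀ k i, ((A ^ k) *ᵥ y) i < 0 := by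
    intro k
    induction k with
    | zero => simpa [Matrix.one_mulVec] using hy
    | succ k ih =>
      intro i
      have h1 := Stmt4Aux.mulVec_neg hAnn hAU ih i
      rw [Matrix.mulVec_mulVec, ← pow_succ'] at h1
      exact h1
  have hneg_t : ∀ i, t * w i < 0 := by
    intro i
    have hle : t * w i ≤ 0 := by
      refine le_of_tendsto (htend i) (Eventually.of_forall fun k => ?_)
      exact (div_neg_of_neg_of_pos (hPk k i) (pow_pos hlam0 k)).le
    exact lt_of_le_of_ne hle (mul_ne_zero htne (hwne i))
  -- coordinatewise divergence of the full iterates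
  have hdiv : ∀ i, Tendsto (fun k : ℕ => ((A ^ k) *ᵥ y) i) atTop atBot := by
    intro i
    have hhalf : ∀ᶠ k in atTop, ((A ^ k) *ᵥ y) i ≤ lam ^ k * (t * w i / 2) := by
      have hev : ∀ᶠ k in atTop, ((A ^ k) *ᵥ y) i / lam ^ k < t * w i / 2 :=
        (htend i).eventually_lt_const (by have := hneg_t i; linarith)
      filter_upwards [hev] with k hk
      have hp : (0:ℝ) < lam ^ k := pow_pos hlam0 k
      calc ((A ^ k) *ᵥ y) i = lam ^ k * (((A ^ k) *ᵥ y) i / lam ^ k) := by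
            field_simp
        _ ≤ lam ^ k * (t * w i / 2) := by nlinarith
    refine tendsto_atBot_mono' atTop hhalf ?_
    have hpow : Tendsto (fun k : ℕ => (lam : ℝ) ^ k) atTop atTop :=
      tendsto_pow_atTop_atTop_of_one_lt hlam
    exact hpow.atTop_mul_const_of_neg (by have := hneg_t i; linarith)
  constructor
  · intro l k i
    rw [← Matrix.mulVec_mulVec]
    exact Stmt4Aux.mulVec_neg (Stmt4Aux.cycProd_nonneg hnonneg _ _)
      (Stmt4Aux.cycProd_isUnit hinv _ _) (hPk k) i
  · intro l i
    have h1 := Stmt4Aux.mulVec_tendsto_atBot (A := Mpartial M l ⟨0, hm⟩)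
      (Stmt4Aux.cycProd_nonneg hnonneg _ _) (Stmt4Aux.cycProd_isUnit hinv _ _)
      (z := fun k => (A ^ k) *ᵥ y) (fun k j => (hPk k j).le) hdiv i
    refine Tendsto.congr (fun k => ?_) h1
    rw [Matrix.mulVec_mulVec]
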